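/- arXiv:2505.22603 — 2 statements merged into one kernel-verified Lean document; each statement's English description precedes it below -/
import Mathlib

section
/- (Lemma on avoiding small indices) Let C be a countable atomless Boolean subalgebra of the interval algebra B. Then for every nonempty a ∈ C and every n ∈ ω there exists b ∈ C with b ⊆ a and min(int(b)) > n. -/
open Set

/-- `X = [0,1) ∩ ℚ`, represented as a set of rationals. -/
def Xset : Set ℚ := {x | 0 ≤ x ∧ x < 1}

/-- `X ∪ {1}`, the possible endpoints. -/
def Eset : Set ℚ := Xset ∪ {1}

/-- `f` (restricted to `{0,…,2n-1}`) is an increasing sequence of endpoints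
representing `a` as a union of half-open intervals `[f(2i), f(2i+1))`. -/
def IsGoodSeq (n : ℕ) (f : ℕ → ℚ) (a : Set ℚ) : Prop :=
  (∀ i < 2 * n, f i ∈ Eset) ∧
  (∀ i j : ℕ, i < j → j < 2 * n → f i < f j) ∧
  (∀ x ∈ Xset, (x ∈ a ↔ ∃ i < n, f (2 * i) ≤ x ∧ x < f (2 * i + 1)))

/-- A subset of `X` is good if it is a finite union of half-open intervals. -/
def IsGood (a : Set ℚ) : Prop := a ⊆ Xset ∧ ∃ n f, IsGoodSeq n f a

/-- The set of endpoints of a good set (the image of its endpoint sequence). -/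
def endpoints (a : Set ℚ) : Set ℚ :=
  {u | ∃ n f, IsGoodSeq n f a ∧ ∃ i < 2 * n, f i = u}

/-- A function `e` is finite-to-one on `X ∪ {1}`. -/
def FinToOne (e : ℚ → ℕ) : Prop := ∀ m : ℕ, {x ∈ Eset | e x = m}.Finite

/-- `int(a) = {e(u) : u ∈ Im(seq_a)}`, the interesting numbers of `a`. -/
def intS (e : ℚ → ℕ) (a : Set ℚ) : Set ℕ := e '' endpoints a

/-- `a` and `b` oscillate at `i`: for some side `k`, `i` belongs to `int` of that
side only, and the largest `j < i` lying in the symmetric difference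
`int(a) ∆ int(b)` (if any) belongs to the other side only. -/
def OscAt (e : ℚ → ℕ) (a b : Set ℚ) (i : ℕ) : Prop :=
  ∃ k : Bool,
    (i ∈ intS e (bif k then b else a) ∧ i ∉ intS e (bif k then a else b)) ∧
    ∀ j, j < i → j ∈ symmDiff (intS e a) (intS e b) →
      (∀ j', j < j' → j' < i → j' ∉ symmDiff (intS e a) (intS e b)) →
      (j ∈ intS e (bif k then a else b) ∧ j ∉ intS e (bif k then b else a))

/-- The oscillation of `a` and `b`: the number of `i` at which they oscillate. -/
noncomputable def osc (e : ℚ → ℕ) (a b : Set ℚ) : ℕ := {i | OscAt e a b i}.ncard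

/-- `C` is a Boolean subalgebra of the interval algebra of good subsets of `X`. -/
def IsSubalg (C : Set (Set ℚ)) : Prop :=
  (∀ a ∈ C, IsGood a) ∧ ∅ ∈ C ∧ Xset ∈ C ∧
  (∀ a ∈ C, ∀ b ∈ C, a ∪ b ∈ C) ∧
  (∀ a ∈ C, ∀ b ∈ C, a ∩ b ∈ C) ∧
  (∀ a ∈ C, Xset \ a ∈ C)

/-- `C` is atomless: every nonempty member properly contains a nonempty member. -/
def IsAtomlessAlg (C : Set (Set ℚ)) : Prop :=
  ∀ a ∈ C, a ≠ ∅ → ∃ b ∈ C, b ≠ ∅ ∧ b ⊂ a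

lemma Eset_bounds {u : ℚ} (h : u ∈ Eset) : 0 ≤ u ∧ u ≤ 1 := by
  rcases h with h | h
  · exact ⟨h.1, le_of_lt h.2⟩
  · simp only [Set.mem_singleton_iff] at h
    simp [h]

lemma ep_cases {b : Set ℚ} {u : ℚ} (hu : u ∈ endpoints b) :
    u ∈ Eset ∧ (u ∈ b ∨ ∃ α : ℚ, 0 ≤ α ∧ α < u ∧ ∀ x : ℚ, α < x → x < u → x ∈ b) := by
  obtain ⟨m, f, ⟨h1, h2, h3⟩, i, hi, hfi⟩ := hu
  subst hfi
  refine ⟨h1 i hi, ?_⟩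
  rcases Nat.even_or_odd i with ⟨k, hk⟩ | ⟨k, hk⟩
  · have hk2 : i = 2 * k := by omega
    subst hk2
    left
    have hlt : 2 * k + 1 < 2 * m := by omega
    have hfk : f (2 * k) < f (2 * k + 1) := h2 _ _ (by omega) hlt
    have hb1 := Eset_bounds (h1 _ hlt)
    have hb0 := Eset_bounds (h1 _ hi)
    have hX : f (2 * k) ∈ Xset := ⟨hb0.1, lt_of_lt_of_le hfk hb1.2⟩
    exact (h3 _ hX).mpr ⟨k, by omega, le_refl _, hfk⟩
  · subst hk
    right
    have h2k : 2 * k < 2 * m := by omega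
    have hαE := Eset_bounds (h1 _ h2k)
    have huE := Eset_bounds (h1 _ hi)
    refine ⟨f (2 * k), hαE.1, h2 _ _ (by omega) hi, fun x hx1 hx2 => ?_⟩
    have hxX : x ∈ Xset := ⟨le_of_lt (lt_of_le_of_lt hαE.1 hx1), lt_of_lt_of_le hx2 huE.2⟩
    exact (h3 _ hxX).mpr ⟨k, by omega, le_of_lt hx1, hx2⟩

lemma ep_nonempty {b : Set ℚ} (hg : IsGood b) (hne : b ≠ ∅) : (endpoints b).Nonempty := by
  obtain ⟨hsub, m, f, hgs⟩ := hg
  obtain ⟨x, hx⟩ := Set.nonempty_iff_ne_empty.mpr hne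
  obtain ⟨i, him, -⟩ := (hgs.2.2 x (hsub hx)).mp hx
  exact ⟨f 0, m, f, hgs, 0, by omega, rfl⟩

lemma disjoint_family (C : Set (Set ℚ)) (hC : IsSubalg C) (hCat : IsAtomlessAlg C)
    (a : Set ℚ) (ha : a ∈ C) (hne : a ≠ ∅) :
    ∀ k : ℕ, ∃ b : ℕ → Set ℚ,
      (∀ i < k, b i ∈ C ∧ b i ≠ ∅ ∧ b i ⊆ a) ∧
      (∀ i j, i < k → j < k → i ≠ j → Disjoint (b i) (b j)) ∧
      ∃ r ∈ C, r ≠ ∅ ∧ r ⊆ a ∧ ∀ i < k, Disjoint (b i) r := by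
  intro k
  induction k with
  | zero => exact ⟨fun _ => ∅, by simp, by simp, a, ha, hne, subset_rfl, by simp⟩
  | succ k ih =>
    obtain ⟨b, hb, hdisj, r, hrC, hrne, hra, hrd⟩ := ih
    obtain ⟨c, hcC, hcne, hcr⟩ := hCat r hrC hrne
    have hrX : r ⊆ Xset := (hC.1 r hrC).1
    have hre : r ∩ (Xset \ c) = r \ c := by
      ext x
      constructor
      · rintro ⟨hx1, -, hx3⟩; exact ⟨hx1, hx3⟩
      · rintro ⟨hx1, hx2⟩; exact ⟨hx1, hrX hx1, hx2⟩
    have hrcC : r ∩ (Xset \ c) ∈ C := hC.2.2.2.2.1 r hrC _ (hC.2.2.2.2.2 c hcC)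
    obtain ⟨x, hxr, hxc⟩ := Set.exists_of_ssubset hcr
    refine ⟨fun i => if i = k then c else b i, ?_, ?_, r ∩ (Xset \ c), hrcC, ?_, ?_, ?_⟩
    · intro i hi
      by_cases h : i = k
      · simp only [h, if_pos rfl]
        exact ⟨hcC, hcne, subset_trans hcr.subset hra⟩
      · simp only [if_neg h]
        exact hb i (by omega)
    · intro i j hi hj hij
      by_cases h1 : i = k <;> by_cases h2 : j = k
      · omega
      · simp only [h1, if_pos rfl, if_neg h2]
        exact (Set.disjoint_of_subset_right hcr.subset (hrd j (by omega))).symm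
      · simp only [h2, if_pos rfl, if_neg h1]
        exact Set.disjoint_of_subset_right hcr.subset (hrd i (by omega))
      · simp only [if_neg h1, if_neg h2]
        exact hdisj i j (by omega) (by omega) hij
    · rw [hre]
      intro h
      have : x ∈ (∅ : Set ℚ) := h ▸ (⟨hxr, hxc⟩ : x ∈ r \ c)
      exact this
    · rw [hre]; exact subset_trans Set.diff_subset hra
    · intro i hi
      by_cases h : i = k
      · simp only [h, if_pos rfl, hre]
        exact Set.disjoint_left.mpr fun y hy hy2 => hy2.2 hy
      · simp only [if_neg h, hre]
        exact Set.disjoint_of_subset_right Set.diff_subset (hrd i (by omega))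

/-- inside a countable atomless subalgebra, every nonempty
element contains an element all of whose interesting numbers exceed `n`. -/
theorem avoid_small_indices (e : ℚ → ℕ) (he : FinToOne e)
    (C : Set (Set ℚ)) (hC : IsSubalg C) (hCat : IsAtomlessAlg C)
    (hCc : C.Countable) (a : Set ℚ) (ha : a ∈ C) (hne : a ≠ ∅) (n : ℕ) :
    ∃ b ∈ C, b ⊆ a ∧ (intS e b).Nonempty ∧ ∀ m ∈ intS e b, n < m := by
  classical
  set F := {x | x ∈ Eset ∧ e x ≤ n} with hFdef
  have hF : F.Finite := by
    have hsub : F ⊆ ⋃ m ∈ Finset.range (n + 1), {x ∈ Eset | e x = m} := by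
      rintro x ⟨hx, hxe⟩
      exact Set.mem_biUnion (Finset.mem_range.mpr (by omega)) ⟨hx, rfl⟩
    exact (Set.Finite.biUnion (Finset.range (n + 1)).finite_toSet
      (fun m _ => he m)).subset hsub
  set K := 2 * hF.toFinset.card + 1 with hK
  obtain ⟨b, hb, hdisj, -⟩ := disjoint_family C hC hCat a ha hne K
  have key : ∃ j < K, ∀ u ∈ endpoints (b j), u ∉ F := by
    by_contra hcon
    push_neg at hcon
    have h : ∀ j : Fin K, ∃ u, u ∈ endpoints (b j) ∧ u ∈ F := by
      intro j
      obtain ⟨u, h1, h2⟩ := hcon j j.2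
      exact ⟨u, h1, h2⟩
    choose u hu1 hu2 using h
    have hinj : Function.Injective (fun j : Fin K =>
        ((⟨u j, hF.mem_toFinset.mpr (hu2 j)⟩ : hF.toFinset),
          if u j ∈ b j then true else false)) := by
      intro j j' hj
      by_contra hne'
      have hud : u j = u j' := congrArg (fun p => (p.1 : ℚ)) hj
      have hsnd := congrArg Prod.snd hj
      simp only at hsnd
      have hbe : (u j ∈ b ↑j) ↔ (u j' ∈ b ↑j') := by
        by_cases h1 : u j ∈ b ↑j <;> by_cases h2 : u j' ∈ b ↑j' <;>
          simp [h1, h2] at hsnd ⊢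
      have hd : Disjoint (b ↑j) (b ↑j') :=
        hdisj j j' j.2 j'.2 (fun h => hne' (Fin.ext h))
      by_cases hm : u j ∈ b ↑j
      · exact Set.disjoint_left.mp hd hm (hud ▸ hbe.mp hm)
      · have hm' : u j' ∉ b ↑j' := fun h => hm (hbe.mpr h)
        obtain ⟨-, hc⟩ := ep_cases (hu1 j)
        obtain ⟨-, hc'⟩ := ep_cases (hu1 j')
        rcases hc with h | ⟨α, hα0, hαu, hαb⟩
        · exact hm h
        rcases hc' with h | ⟨α', hα0', hαu', hαb'⟩
        · exact hm' h
        have hαu'2 : α' < u j := hud ▸ hαu'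
        have hmax : max α α' < u j := max_lt hαu hαu'2
        set x := (max α α' + u j) / 2 with hx
        have hx1 : max α α' < x := by rw [hx]; linarith
        have hx2 : x < u j := by rw [hx]; linarith
        have hxb : x ∈ b ↑j :=
          hαb x (lt_of_le_of_lt (le_max_left _ _) hx1) hx2
        have hxb' : x ∈ b ↑j' :=
          hαb' x (lt_of_le_of_lt (le_max_right _ _) hx1) (hud ▸ hx2)
        exact Set.disjoint_left.mp hd hxb hxb'
    have hcard := Fintype.card_le_of_injective _ hinj
    simp only [Fintype.card_fin, Fintype.card_prod, Fintype.card_coe,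
      Fintype.card_bool] at hcard
    omega
  obtain ⟨j, hj, hjF⟩ := key
  obtain ⟨hbC, hbne, hba⟩ := hb j hj
  refine ⟨b j, hbC, hba, ?_, ?_⟩
  · obtain ⟨v, hv⟩ := ep_nonempty (hC.1 _ hbC) hbne
    exact ⟨e v, v, hv, rfl⟩
  · rintro m ⟨v, hv, rfl⟩
    by_contra hle
    exact hjF v hv ⟨(ep_cases hv).1, by omega⟩
end

section
/- (Realizing every oscillation value) Let C be a countable atomless Boolean subalgebra of the interval algebra B. For every n > 0 there exist a, b ∈ C with a ∩ b = ∅, 0 ∉ a ∪ b, and osc(a, b) = n. -/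
open Set

/-! ### Auxiliary development -/

/-- Left endpoints of a set of rationals. -/
def LEpt (s : Set ℚ) : Set ℚ :=
  {u | u ∈ s ∧ ∃ q, q < u ∧ ∀ x, q < x → x < u → x ∉ s}

/-- Right endpoints of a set of rationals. -/
def REpt (s : Set ℚ) : Set ℚ :=
  {u | u ∈ Eset ∧ u ∉ s ∧ ∃ p, 0 ≤ p ∧ p < u ∧ ∀ x, p ≤ x → x < u → x ∈ s}

lemma Eset_nonneg {u : ℚ} (h : u ∈ Eset) : 0 ≤ u := by
  rcases h with h | h
  · exact h.1
  · simp only [Set.mem_singleton_iff] at h; rw [h]; norm_num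

lemma Eset_le_one {u : ℚ} (h : u ∈ Eset) : u ≤ 1 := by
  rcases h with h | h
  · exact le_of_lt h.2
  · simp only [Set.mem_singleton_iff] at h; rw [h]

lemma mem_Xset_of_lt_one {u : ℚ} (h : u ∈ Eset) (h1 : u < 1) : u ∈ Xset := by
  rcases h with h | h
  · exact h
  · simp only [Set.mem_singleton_iff] at h; rw [h] at h1; norm_num at h1

lemma Xset_subset_Eset : Xset ⊆ Eset := fun _ h => Or.inl h

section GoodSeq

variable {n : ℕ} {f : ℕ → ℚ} {a : Set ℚ}

lemma gs_left_Xset (hf : IsGoodSeq n f a) {i : ℕ} (hi : i < n) : f (2 * i) ∈ Xset := by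
  have h1 : f (2 * i) < f (2 * i + 1) := hf.2.1 _ _ (by omega) (by omega)
  have h2 : f (2 * i + 1) ≤ 1 := Eset_le_one (hf.1 _ (by omega))
  exact mem_Xset_of_lt_one (hf.1 _ (by omega)) (lt_of_lt_of_le h1 h2)

lemma gs_left_mem (hf : IsGoodSeq n f a) {i : ℕ} (hi : i < n) : f (2 * i) ∈ a := by
  have hx := gs_left_Xset hf hi
  exact ((hf.2.2 _ hx).2 ⟨i, hi, le_refl _, hf.2.1 _ _ (by omega) (by omega)⟩)

lemma gs_right_notMem (hf : IsGoodSeq n f a) (hsub : a ⊆ Xset) {i : ℕ} (hi : i < n) :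
    f (2 * i + 1) ∉ a := by
  intro hmem
  have hx : f (2 * i + 1) ∈ Xset := hsub hmem
  rcases (hf.2.2 _ hx).1 hmem with ⟨j, hj, hle, hlt⟩
  rcases le_or_gt j i with h | h
  · have : f (2 * j + 1) ≤ f (2 * i + 1) := by
      rcases eq_or_lt_of_le h with rfl | h'
      · exact le_refl _
      · exact le_of_lt (hf.2.1 _ _ (by omega) (by omega))
    exact absurd (lt_of_lt_of_le hlt this) (lt_irrefl _)
  · have : f (2 * i + 1) < f (2 * j) := hf.2.1 _ _ (by omega) (by omega)
    exact absurd (lt_of_le_of_lt hle this) (lt_irrefl _)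

lemma gs_left_LE (hf : IsGoodSeq n f a) (hsub : a ⊆ Xset) {i : ℕ} (hi : i < n) :
    f (2 * i) ∈ LEpt a := by
  refine ⟨gs_left_mem hf hi, ?_⟩
  rcases Nat.eq_zero_or_pos i with rfl | hpos
  · refine ⟨f 0 - 1, by norm_num, fun x hqx hxu hxa => ?_⟩
    have hx : x ∈ Xset := hsub hxa
    rcases (hf.2.2 _ hx).1 hxa with ⟨j, hj, hle, _⟩
    have : f (2 * 0) ≤ f (2 * j) := by
      rcases Nat.eq_zero_or_pos j with rfl | hj'
      · exact le_refl _
      · exact le_of_lt (hf.2.1 _ _ (by omega) (by omega))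
    simp only [Nat.mul_zero] at this hxu
    exact absurd (lt_of_le_of_lt (le_trans this hle) hxu) (lt_irrefl _)
  · refine ⟨f (2 * i - 1), hf.2.1 _ _ (by omega) (by omega), fun x hqx hxu hxa => ?_⟩
    have hx : x ∈ Xset := hsub hxa
    rcases (hf.2.2 _ hx).1 hxa with ⟨j, hj, hle, hlt⟩
    rcases le_or_gt j (i - 1) with h | h
    · have : f (2 * j + 1) ≤ f (2 * i - 1) := by
        rcases eq_or_lt_of_le h with h' | h'
        · have e2 : 2 * j + 1 = 2 * i - 1 := by omega
          rw [e2]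
        · exact le_of_lt (hf.2.1 _ _ (by omega) (by omega))
      exact absurd (lt_of_lt_of_le hlt (le_trans this (le_of_lt hqx))) (lt_irrefl _)
    · have hji : i ≤ j := by omega
      have : f (2 * i) ≤ f (2 * j) := by
        rcases eq_or_lt_of_le hji with rfl | h'
        · exact le_refl _
        · exact le_of_lt (hf.2.1 _ _ (by omega) (by omega))
      exact absurd (lt_of_le_of_lt (le_trans this hle) hxu) (lt_irrefl _)

lemma gs_right_RE (hf : IsGoodSeq n f a) (hsub : a ⊆ Xset) {i : ℕ} (hi : i < n) :
    f (2 * i + 1) ∈ REpt a := by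
  refine ⟨hf.1 _ (by omega), gs_right_notMem hf hsub hi, f (2 * i),
    Eset_nonneg (hf.1 _ (by omega)), hf.2.1 _ _ (by omega) (by omega),
    fun x hpx hxu => ?_⟩
  have hx : x ∈ Xset := by
    constructor
    · exact le_trans (Eset_nonneg (hf.1 _ (by omega))) hpx
    · exact lt_of_lt_of_le hxu (Eset_le_one (hf.1 _ (by omega)))
  exact (hf.2.2 _ hx).2 ⟨i, hi, hpx, hxu⟩

lemma LE_eq_left (hf : IsGoodSeq n f a) (hsub : a ⊆ Xset) {u : ℚ} (hu : u ∈ LEpt a) :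
    ∃ i < n, f (2 * i) = u := by
  obtain ⟨hua, q, hq, hgap⟩ := hu
  have hx : u ∈ Xset := hsub hua
  rcases (hf.2.2 _ hx).1 hua with ⟨i, hi, hle, hlt⟩
  refine ⟨i, hi, ?_⟩
  by_contra hne
  have hstrict : f (2 * i) < u := lt_of_le_of_ne hle hne
  set x := (max q (f (2 * i)) + u) / 2 with hxdef
  have h1 : max q (f (2 * i)) < u := max_lt hq hstrict
  have hx1 : max q (f (2 * i)) < x := by rw [hxdef]; linarith
  have hx2 : x < u := by rw [hxdef]; linarith
  have hxq : q < x := lt_of_le_of_lt (le_max_left _ _) hx1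
  have hxf : f (2 * i) ≤ x := le_of_lt (lt_of_le_of_lt (le_max_right _ _) hx1)
  have hxX : x ∈ Xset := by
    constructor
    · exact le_trans (Eset_nonneg (hf.1 _ (by omega))) hxf
    · exact lt_trans hx2 hx.2
  exact hgap x hxq hx2 ((hf.2.2 _ hxX).2 ⟨i, hi, hxf, lt_trans hx2 hlt⟩)

lemma RE_eq_right (hf : IsGoodSeq n f a) (hsub : a ⊆ Xset) {u : ℚ} (hu : u ∈ REpt a) :
    ∃ i < n, f (2 * i + 1) = u := by
  obtain ⟨huE, hua, p, hp0, hpu, hseg⟩ := hu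
  set x := (p + u) / 2 with hxdef
  have hx1 : p ≤ x := by rw [hxdef]; linarith
  have hx2 : x < u := by rw [hxdef]; linarith
  have hxa : x ∈ a := hseg x hx1 hx2
  have hxX : x ∈ Xset := hsub hxa
  rcases (hf.2.2 _ hxX).1 hxa with ⟨i, hi, hle, hlt⟩
  refine ⟨i, hi, ?_⟩
  rcases lt_trichotomy (f (2 * i + 1)) u with h | h | h
  · exfalso
    have hfa : f (2 * i + 1) ∈ a := hseg _ (le_trans hx1 (le_of_lt hlt)) h
    exact gs_right_notMem hf hsub hi hfa
  · exact h
  · exfalso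
    have huX : u ∈ Xset := mem_Xset_of_lt_one huE
      (lt_of_lt_of_le h (Eset_le_one (hf.1 _ (by omega))))
    exact hua ((hf.2.2 _ huX).2 ⟨i, hi, le_trans hle (le_of_lt hx2), h⟩)

end GoodSeq
lemma endpoints_eq {a : Set ℚ} (hsub : a ⊆ Xset) (hgs : ∃ n f, IsGoodSeq n f a) :
    endpoints a = LEpt a ∪ REpt a := by
  obtain ⟨n, f, hf⟩ := hgs
  ext u
  constructor
  · rintro ⟨m, g, hg, i, hi, rfl⟩
    rcases Nat.even_or_odd i with ⟨j, hj⟩ | ⟨j, hj⟩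
    · left
      have : i = 2 * j := by omega
      rw [this]; exact gs_left_LE hg hsub (by omega)
    · right
      have : i = 2 * j + 1 := by omega
      rw [this]; exact gs_right_RE hg hsub (by omega)
  · rintro (hu | hu)
    · obtain ⟨i, hi, hfi⟩ := LE_eq_left hf hsub hu
      exact ⟨n, f, hf, 2 * i, by omega, hfi⟩
    · obtain ⟨i, hi, hfi⟩ := RE_eq_right hf hsub hu
      exact ⟨n, f, hf, 2 * i + 1, by omega, hfi⟩

lemma endpoints_subset_Eset {a : Set ℚ} : endpoints a ⊆ Eset := by
  rintro u ⟨m, g, hg, i, hi, rfl⟩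
  exact hg.1 i hi

lemma endpoints_finite {a : Set ℚ} (hsub : a ⊆ Xset) (hgs : ∃ n f, IsGoodSeq n f a) :
    (endpoints a).Finite := by
  obtain ⟨n, f, hf⟩ := hgs
  apply Set.Finite.subset ((Set.finite_Iio (2 * n)).image f)
  rw [endpoints_eq hsub ⟨n, f, hf⟩]
  rintro u (hu | hu)
  · obtain ⟨i, hi, hfi⟩ := LE_eq_left hf hsub hu
    exact ⟨2 * i, by simpa using (by omega : 2 * i < 2 * n), hfi⟩
  · obtain ⟨i, hi, hfi⟩ := RE_eq_right hf hsub hu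
    exact ⟨2 * i + 1, by simpa using (by omega : 2 * i + 1 < 2 * n), hfi⟩

lemma endpoints_empty : endpoints (∅ : Set ℚ) = ∅ := by
  ext u
  simp only [Set.mem_empty_iff_false, iff_false]
  rintro ⟨m, g, hg, i, hi, rfl⟩
  have hm : 0 < m := by omega
  exact absurd (gs_left_mem hg (i := 0) hm) (by simp)

lemma endpoints_nonempty {a : Set ℚ} (hgs : ∃ n f, IsGoodSeq n f a)
    (hsub : a ⊆ Xset) (hne : a ≠ ∅) : (endpoints a).Nonempty := by
  obtain ⟨n, f, hf⟩ := hgs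
  obtain ⟨x, hx⟩ := Set.nonempty_iff_ne_empty.2 hne
  rcases (hf.2.2 _ (hsub hx)).1 hx with ⟨i, hi, _, _⟩
  exact ⟨f 0, n, f, hf, 0, by omega, rfl⟩
lemma accum_lemma {m : ℕ} {g : ℕ → ℚ} {b : Set ℚ} (hg : IsGoodSeq m g b)
    (hbsub : b ⊆ Xset) {u : ℚ} (huE : u ∈ Eset)
    (hacc : ∀ q, q < u → ∃ x, x ∈ b ∧ q < x ∧ x < u) : u ∈ b ∨ u ∈ REpt b := by
  classical
  set T : Finset ℚ := ((Finset.range (2 * m)).filter (fun i => g i < u)).image g with hT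
  have hTmem : ∀ v, v ∈ T ↔ ∃ i, i < 2 * m ∧ g i < u ∧ g i = v := by
    intro v
    simp only [hT, Finset.mem_image, Finset.mem_filter, Finset.mem_range]
    constructor
    · rintro ⟨i, ⟨h1, h2⟩, h3⟩; exact ⟨i, h1, h2, h3⟩
    · rintro ⟨i, h1, h2, h3⟩; exact ⟨i, ⟨h1, h2⟩, h3⟩
  have hTne : T.Nonempty := by
    obtain ⟨x, hxb, _, hxu⟩ := hacc (u - 1) (by linarith)
    rcases (hg.2.2 _ (hbsub hxb)).1 hxb with ⟨j, hj, hle, _⟩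
    exact ⟨g (2 * j), (hTmem _).2 ⟨2 * j, by omega, lt_of_le_of_lt hle hxu, rfl⟩⟩
  set q0 := T.max' hTne with hq0
  have hq0u : q0 < u := by
    obtain ⟨i, _, h2, h3⟩ := (hTmem q0).1 (T.max'_mem hTne)
    rw [← h3]; exact h2
  obtain ⟨x, hxb, hq0x, hxu⟩ := hacc q0 hq0u
  rcases (hg.2.2 _ (hbsub hxb)).1 hxb with ⟨j, hj, hle, hlt⟩
  have hgj_le : g (2 * j) ≤ q0 :=
    T.le_max' _ ((hTmem _).2 ⟨2 * j, by omega, lt_of_le_of_lt hle hxu, rfl⟩)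
  rcases lt_trichotomy (g (2 * j + 1)) u with h | h | h
  · exfalso
    have : g (2 * j + 1) ≤ q0 := T.le_max' _ ((hTmem _).2 ⟨2 * j + 1, by omega, h, rfl⟩)
    exact absurd (lt_of_le_of_lt this (lt_trans hq0x hlt)) (lt_irrefl _)
  · by_cases hub : u ∈ b
    · exact Or.inl hub
    · refine Or.inr ⟨huE, hub, g (2 * j), Eset_nonneg (hg.1 _ (by omega)),
        lt_of_le_of_lt hgj_le hq0u, fun x' h1 h2 => ?_⟩
      have hx'X : x' ∈ Xset := by
        constructor
        · exact le_trans (Eset_nonneg (hg.1 _ (by omega))) h1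
        · calc x' < u := h2
            _ ≤ 1 := Eset_le_one huE
      exact (hg.2.2 _ hx'X).2 ⟨j, hj, h1, by rw [h]; exact h2⟩
  · left
    have huX : u ∈ Xset := by
      rcases huE with h' | h'
      · exact h'
      · exfalso
        simp only [Set.mem_singleton_iff] at h'
        rw [h'] at h
        exact absurd (lt_of_le_of_lt (Eset_le_one (hg.1 _ (by omega))) h) (lt_irrefl _)
    exact (hg.2.2 _ huX).2 ⟨j, hj, le_trans hle (le_of_lt hxu), h⟩

lemma LE_union_subset {a b : Set ℚ} : LEpt (a ∪ b) ⊆ LEpt a ∪ LEpt b := by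
  rintro u ⟨hu, q, hq, hgap⟩
  rcases hu with hu | hu
  · exact Or.inl ⟨hu, q, hq, fun x h1 h2 hx => hgap x h1 h2 (Or.inl hx)⟩
  · exact Or.inr ⟨hu, q, hq, fun x h1 h2 hx => hgap x h1 h2 (Or.inr hx)⟩

lemma RE_union_subset {m : ℕ} {g : ℕ → ℚ} {b : Set ℚ} (hgb : IsGoodSeq m g b)
    (hbsub : b ⊆ Xset) {a : Set ℚ} :
    REpt (a ∪ b) ⊆ REpt a ∪ REpt b := by
  rintro u ⟨huE, hub, p, hp0, hpu, hseg⟩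
  by_cases hacc : ∀ q, q < u → ∃ x, x ∈ b ∧ q < x ∧ x < u
  · rcases accum_lemma hgb hbsub huE hacc with h | h
    · exact absurd (Or.inr h) hub
    · exact Or.inr h
  · push_neg at hacc
    obtain ⟨q, hqu, hq⟩ := hacc
    left
    have h1 : max p q < u := max_lt hpu hqu
    set p' := (max p q + u) / 2 with hp'
    have hp'1 : max p q < p' := by rw [hp']; linarith
    have hp'2 : p' < u := by rw [hp']; linarith
    refine ⟨huE, fun h => hub (Or.inl h), p',
      le_trans hp0 (le_of_lt (lt_of_le_of_lt (le_max_left _ _) hp'1)),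
      hp'2, fun x hx1 hx2 => ?_⟩
    have hxab : x ∈ a ∪ b :=
      hseg x (le_trans (le_trans (le_max_left p q) (le_of_lt hp'1)) hx1) hx2
    rcases hxab with h | h
    · exact h
    · exfalso
      have hqx : q < x := lt_of_le_of_lt (le_max_right p q) (lt_of_lt_of_le hp'1 hx1)
      exact absurd hx2 (not_lt.2 (hq x h hqx))

lemma LE_subset_union {a b : Set ℚ} {m : ℕ} {g : ℕ → ℚ} (hgb : IsGoodSeq m g b)
    (hbsub : b ⊆ Xset) (hasub : a ⊆ Xset) (hdisj : a ∩ b = ∅)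
    (hep : ∀ u, u ∈ LEpt a → u ∈ REpt b → False) :
    LEpt a ⊆ LEpt (a ∪ b) := by
  rintro u ⟨hua, q, hq, hgap⟩
  by_cases hacc : ∀ q', q' < u → ∃ x, x ∈ b ∧ q' < x ∧ x < u
  · exfalso
    rcases accum_lemma hgb hbsub (Xset_subset_Eset (hasub hua)) hacc with h | h
    · exact absurd (Set.mem_inter hua h) (by rw [hdisj]; simp)
    · exact hep u ⟨hua, q, hq, hgap⟩ h
  · push_neg at hacc
    obtain ⟨q', hq'u, hq'⟩ := hacc
    refine ⟨Or.inl hua, max q q', max_lt hq hq'u, fun x h1 h2 hx => ?_⟩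
    rcases hx with hx | hx
    · exact hgap x (lt_of_le_of_lt (le_max_left _ _) h1) h2 hx
    · exact absurd h2 (not_lt.2 (hq' x hx (lt_of_le_of_lt (le_max_right _ _) h1)))

lemma RE_subset_union {a b : Set ℚ} (hdisj : a ∩ b = ∅)
    (hep : ∀ u, u ∈ REpt a → u ∈ LEpt b → False) :
    REpt a ⊆ REpt (a ∪ b) := by
  rintro u ⟨huE, hua, p, hp0, hpu, hseg⟩
  have hub : u ∉ b := by
    intro hub
    refine hep u ⟨huE, hua, p, hp0, hpu, hseg⟩ ⟨hub, p, hpu, fun x h1 h2 hx => ?_⟩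
    exact absurd (Set.mem_inter (hseg x (le_of_lt h1) h2) hx) (by rw [hdisj]; simp)
  refine ⟨huE, ?_, p, hp0, hpu, fun x h1 h2 => Or.inl (hseg x h1 h2)⟩
  rintro (h | h)
  · exact hua h
  · exact hub h

lemma endpoints_union {a b : Set ℚ} (hasub : a ⊆ Xset) (hbsub : b ⊆ Xset)
    (hga : ∃ n f, IsGoodSeq n f a) (hgb : ∃ n f, IsGoodSeq n f b)
    (hgab : ∃ n f, IsGoodSeq n f (a ∪ b))
    (hdisj : a ∩ b = ∅) (hep : endpoints a ∩ endpoints b = ∅) :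
    endpoints (a ∪ b) = endpoints a ∪ endpoints b := by
  obtain ⟨ma, ga, hga'⟩ := hga
  obtain ⟨mb, gb, hgb'⟩ := hgb
  have habsub : a ∪ b ⊆ Xset := Set.union_subset hasub hbsub
  have hEa : endpoints a = LEpt a ∪ REpt a := endpoints_eq hasub ⟨ma, ga, hga'⟩
  have hEb : endpoints b = LEpt b ∪ REpt b := endpoints_eq hbsub ⟨mb, gb, hgb'⟩
  have hepf : ∀ u, u ∈ LEpt a ∪ REpt a → u ∈ LEpt b ∪ REpt b → False := by
    intro u h1 h2
    have : u ∈ endpoints a ∩ endpoints b := ⟨hEa ▸ h1, hEb ▸ h2⟩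
    rw [hep] at this; exact this
  have hdisj' : b ∩ a = ∅ := by rw [Set.inter_comm]; exact hdisj
  rw [endpoints_eq habsub hgab, hEa, hEb]
  apply subset_antisymm
  · rintro u (hu | hu)
    · rcases LE_union_subset hu with h | h
      · exact Or.inl (Or.inl h)
      · exact Or.inr (Or.inl h)
    · rcases RE_union_subset hgb' hbsub hu with h | h
      · exact Or.inl (Or.inr h)
      · exact Or.inr (Or.inr h)
  · rintro u ((hu | hu) | (hu | hu))
    · exact Or.inl (LE_subset_union hgb' hbsub hasub hdisj
        (fun v hv1 hv2 => hepf v (Or.inl hv1) (Or.inr hv2)) hu)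
    · exact Or.inr (RE_subset_union hdisj
        (fun v hv1 hv2 => hepf v (Or.inr hv1) (Or.inl hv2)) hu)
    · have := LE_subset_union hga' hasub hbsub hdisj'
        (fun v hv1 hv2 => hepf v (Or.inr hv2) (Or.inl hv1)) hu
      rw [Set.union_comm b a] at this
      exact Or.inl this
    · have := RE_subset_union hdisj'
        (fun v hv1 hv2 => hepf v (Or.inl hv2) (Or.inr hv1)) hu
      rw [Set.union_comm b a] at this
      exact Or.inr this
lemma LEpt_disjoint {x y : Set ℚ} (h : x ∩ y = ∅) {u : ℚ}
    (hx : u ∈ LEpt x) (hy : u ∈ LEpt y) : False := by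
  have : u ∈ x ∩ y := ⟨hx.1, hy.1⟩
  rw [h] at this; exact this

lemma REpt_disjoint {x y : Set ℚ} (h : x ∩ y = ∅) {u : ℚ}
    (hx : u ∈ REpt x) (hy : u ∈ REpt y) : False := by
  obtain ⟨_, _, p, hp0, hpu, hseg⟩ := hx
  obtain ⟨_, _, p', hp0', hpu', hseg'⟩ := hy
  set z := (max p p' + u) / 2 with hz
  have h1 : max p p' < u := max_lt hpu hpu'
  have hz1 : max p p' < z := by rw [hz]; linarith
  have hz2 : z < u := by rw [hz]; linarith
  have : z ∈ x ∩ y := ⟨hseg z (le_of_lt (lt_of_le_of_lt (le_max_left _ _) hz1)) hz2,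
    hseg' z (le_of_lt (lt_of_le_of_lt (le_max_right _ _) hz1)) hz2⟩
  rw [h] at this; exact this

lemma reservoir_split {C : Set (Set ℚ)} (hC : IsSubalg C) (hCat : IsAtomlessAlg C)
    {s : Set ℚ} (hsC : s ∈ C) (hsne : s ≠ ∅) {F : Set ℚ} (hF : F.Finite) :
    ∃ p s', p ∈ C ∧ s' ∈ C ∧ p ≠ ∅ ∧ s' ≠ ∅ ∧ p ⊆ s ∧ s' ⊆ s ∧ p ∩ s' = ∅ ∧
      endpoints p ∩ F = ∅ := by
  classical
  choose! nx hnxC hnxne hnxss using hCat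
  set t : ℕ → Set ℚ := fun k => nx^[k] s with ht
  have ht0 : t 0 = s := rfl
  have htsucc : ∀ k, t (k + 1) = nx (t k) := by
    intro k; simp [ht, Function.iterate_succ_apply']
  have htprop : ∀ k, t k ∈ C ∧ t k ≠ ∅ := by
    intro k; induction k with
    | zero => exact ⟨hsC, hsne⟩
    | succ k ih =>
      rw [htsucc]
      exact ⟨hnxC _ ih.1 ih.2, hnxne _ ih.1 ih.2⟩
  have htss : ∀ k, t (k + 1) ⊂ t k := by
    intro k; rw [htsucc]; exact hnxss _ (htprop k).1 (htprop k).2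
  have htmono : ∀ k l, k ≤ l → t l ⊆ t k := by
    intro k l hkl
    induction l with
    | zero => have : k = 0 := by omega
              rw [this]
    | succ l ih =>
      rcases Nat.lt_or_ge k (l + 1) with h | h
      · exact subset_trans (htss l).1 (ih (by omega))
      · have : k = l + 1 := by omega
        rw [this]
  -- the pieces
  set q : ℕ → Set ℚ := fun k => t k ∩ (Xset \ t (k + 1)) with hq
  have hqC : ∀ k, q k ∈ C := by
    intro k
    exact hC.2.2.2.2.1 _ (htprop k).1 _ (hC.2.2.2.2.2 _ (htprop (k + 1)).1)
  have hqdiff : ∀ k, q k = t k \ t (k + 1) := by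
    intro k
    have hsubX : t k ⊆ Xset := (hC.1 _ (htprop k).1).1
    ext x
    simp only [hq, Set.mem_inter_iff, Set.mem_diff]
    constructor
    · rintro ⟨h1, _, h3⟩; exact ⟨h1, h3⟩
    · rintro ⟨h1, h2⟩; exact ⟨h1, hsubX h1, h2⟩
  have hqne : ∀ k, q k ≠ ∅ := by
    intro k
    rw [hqdiff]
    obtain ⟨x, hx1, hx2⟩ := Set.exists_of_ssubset (htss k)
    exact Set.nonempty_iff_ne_empty.1 ⟨x, hx1, hx2⟩
  have hqdisj : ∀ k l, k < l → q k ∩ q l = ∅ := by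
    intro k l hkl
    rw [Set.eq_empty_iff_forall_notMem]
    rintro x ⟨hx1, hx2⟩
    rw [hqdiff] at hx1 hx2
    exact hx1.2 (htmono (k + 1) l hkl hx2.1)
  -- the bad set of indices is finite
  have hbad : {k : ℕ | (endpoints (q k) ∩ F).Nonempty}.Finite := by
    have hsub : {k : ℕ | (endpoints (q k) ∩ F).Nonempty} ⊆
        ⋃ u ∈ F, {k : ℕ | u ∈ endpoints (q k)} := by
      rintro k ⟨u, hu1, hu2⟩
      exact Set.mem_biUnion hu2 hu1
    apply Set.Finite.subset _ hsub
    apply Set.Finite.biUnion hF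
    intro u _
    have hepq : ∀ k, endpoints (q k) = LEpt (q k) ∪ REpt (q k) := by
      intro k
      exact endpoints_eq (hC.1 _ (hqC k)).1 (hC.1 _ (hqC k)).2
    have : {k : ℕ | u ∈ endpoints (q k)} ⊆
        {k : ℕ | u ∈ LEpt (q k)} ∪ {k : ℕ | u ∈ REpt (q k)} := by
      intro k hk
      rw [Set.mem_setOf_eq, hepq k] at hk
      exact hk
    apply Set.Finite.subset _ this
    apply Set.Finite.union
    · apply Set.Subsingleton.finite
      intro k hk l hl
      by_contra hne
      rcases Nat.lt_or_ge k l with h | h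
      · exact LEpt_disjoint (hqdisj k l h) hk hl
      · exact LEpt_disjoint (hqdisj l k (by omega)) hl hk
    · apply Set.Subsingleton.finite
      intro k hk l hl
      by_contra hne
      rcases Nat.lt_or_ge k l with h | h
      · exact REpt_disjoint (hqdisj k l h) hk hl
      · exact REpt_disjoint (hqdisj l k (by omega)) hl hk
  obtain ⟨k, hk⟩ := hbad.infinite_compl.nonempty
  refine ⟨q k, t (k + 1), hqC k, (htprop (k + 1)).1, hqne k, (htprop (k + 1)).2,
    ?_, ?_, ?_, ?_⟩
  · rw [hqdiff]; exact subset_trans Set.diff_subset (htmono 0 k (by omega))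
  · exact htmono 0 (k + 1) (by omega)
  · rw [hqdiff, Set.eq_empty_iff_forall_notMem]
    rintro x ⟨hx1, hx2⟩
    exact hx1.2 hx2
  · rw [Set.eq_empty_iff_forall_notMem]
    intro u hu
    exact hk ⟨u, hu⟩
lemma oscAt_char (e : ℚ → ℕ) (a b : Set ℚ) (n : ℕ) (D : ℕ → Set ℕ)
    (hne : ∀ i, i < n → (D i).Nonempty)
    (hsep : ∀ i j, i < j → j < n → ∀ x ∈ D i, ∀ y ∈ D j, x < y)
    (hA : intS e a = ⋃ i ∈ {i : ℕ | i < n ∧ Even i}, D i)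
    (hB : intS e b = ⋃ i ∈ {i : ℕ | i < n ∧ ¬Even i}, D i) :
    {t : ℕ | OscAt e a b t} = (fun i => sInf (D i)) '' (Set.Iio n) := by
  have hmemA : ∀ t, t ∈ intS e a ↔ ∃ i, i < n ∧ Even i ∧ t ∈ D i := by
    intro t
    rw [hA]
    simp only [Set.mem_iUnion, Set.mem_setOf_eq, exists_prop]
    constructor
    · rintro ⟨i, ⟨h1, h2⟩, h3⟩; exact ⟨i, h1, h2, h3⟩
    · rintro ⟨i, h1, h2, h3⟩; exact ⟨i, ⟨h1, h2⟩, h3⟩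
  have hmemB : ∀ t, t ∈ intS e b ↔ ∃ i, i < n ∧ ¬Even i ∧ t ∈ D i := by
    intro t
    rw [hB]
    simp only [Set.mem_iUnion, Set.mem_setOf_eq, exists_prop]
    constructor
    · rintro ⟨i, ⟨h1, h2⟩, h3⟩; exact ⟨i, h1, h2, h3⟩
    · rintro ⟨i, h1, h2, h3⟩; exact ⟨i, ⟨h1, h2⟩, h3⟩
  have hDD : ∀ t i j, i < n → j < n → t ∈ D i → t ∈ D j → i = j := by
    intro t i j hi hj hti htj
    rcases lt_trichotomy i j with h | h | h
    · exact absurd (hsep i j h hj t hti t htj) (lt_irrefl _)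
    · exact h
    · exact absurd (hsep j i h hi t htj t hti) (lt_irrefl _)
  have hsideA : ∀ t i, i < n → Even i → t ∈ D i → t ∈ intS e a ∧ t ∉ intS e b := by
    intro t i hi hev htD
    refine ⟨(hmemA t).2 ⟨i, hi, hev, htD⟩, fun h => ?_⟩
    obtain ⟨j, hj, hodd, htj⟩ := (hmemB t).1 h
    exact hodd ((hDD t j i hj hi htj htD) ▸ hev)
  have hsideB : ∀ t i, i < n → ¬Even i → t ∈ D i → t ∈ intS e b ∧ t ∉ intS e a := by
    intro t i hi hev htD
    refine ⟨(hmemB t).2 ⟨i, hi, hev, htD⟩, fun h => ?_⟩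
    obtain ⟨j, hj, hodd, htj⟩ := (hmemA t).1 h
    exact hev ((hDD t j i hj hi htj htD) ▸ hodd)
  have hsymm : ∀ t i, i < n → t ∈ D i → t ∈ symmDiff (intS e a) (intS e b) := by
    intro t i hi htD
    rw [Set.mem_symmDiff]
    by_cases hev : Even i
    · exact Or.inl ⟨(hsideA t i hi hev htD).1, (hsideA t i hi hev htD).2⟩
    · exact Or.inr ⟨(hsideB t i hi hev htD).1, (hsideB t i hi hev htD).2⟩
  have hcover : ∀ t, t ∈ symmDiff (intS e a) (intS e b) → ∃ i, i < n ∧ t ∈ D i := by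
    intro t ht
    rw [Set.mem_symmDiff] at ht
    rcases ht with ⟨h, _⟩ | ⟨h, _⟩
    · obtain ⟨i, hi, _, htD⟩ := (hmemA t).1 h
      exact ⟨i, hi, htD⟩
    · obtain ⟨i, hi, _, htD⟩ := (hmemB t).1 h
      exact ⟨i, hi, htD⟩
  ext t
  simp only [Set.mem_setOf_eq, Set.mem_image, Set.mem_Iio]
  constructor
  · -- OscAt implies t is the min of some block
    rintro ⟨k, ⟨ht1, ht2⟩, hmax⟩
    cases k
    · simp only [Bool.cond_false] at ht1 ht2
      obtain ⟨i, hi, hev, htD⟩ := (hmemA t).1 ht1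
      refine ⟨i, hi, ?_⟩
      by_contra hnmin
      have hlt : sInf (D i) < t := lt_of_le_of_ne (Nat.sInf_le htD) hnmin
      set S : Set ℕ := {x | x ∈ intS e a ∪ intS e b ∧ x < t} with hS
      have hSne : S.Nonempty := ⟨sInf (D i),
        Or.inl ((hmemA _).2 ⟨i, hi, hev, Nat.sInf_mem (hne i hi)⟩), hlt⟩
      have hSbdd : BddAbove S := ⟨t, fun x hx => le_of_lt hx.2⟩
      have hjmem := Nat.sSup_mem hSne hSbdd
      obtain ⟨i', hi', hji'⟩ : ∃ i', i' < n ∧ sSup S ∈ D i' := by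
        rcases hjmem.1 with h | h
        · obtain ⟨i', h1, _, h3⟩ := (hmemA _).1 h; exact ⟨i', h1, h3⟩
        · obtain ⟨i', h1, _, h3⟩ := (hmemB _).1 h; exact ⟨i', h1, h3⟩
      have hii' : i' = i := by
        have h1 : sInf (D i) ≤ sSup S := le_csSup hSbdd
          ⟨Or.inl ((hmemA _).2 ⟨i, hi, hev, Nat.sInf_mem (hne i hi)⟩), hlt⟩
        rcases lt_trichotomy i' i with h | h | h
        · exact absurd (lt_of_lt_of_le (hsep i' i h hi _ hji' _ (Nat.sInf_mem (hne i hi))) h1)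
            (lt_irrefl _)
        · exact h
        · exact absurd (hsep i i' h hi' t htD _ hji') (not_lt.2 (le_of_lt hjmem.2))
      have hconc := hmax (sSup S) hjmem.2 (hsymm _ i' hi' hji')
        (fun j' h1 h2 hj' => absurd (le_csSup hSbdd ⟨(by
          rw [Set.mem_symmDiff] at hj'
          rcases hj' with ⟨h, _⟩ | ⟨h, _⟩
          · exact Or.inl h
          · exact Or.inr h), h2⟩) (not_le.2 h1))
      simp only [Bool.cond_false] at hconc
      exact hconc.2 ((hmemA _).2 ⟨i, hii' ▸ hi, hii' ▸ hev, hii' ▸ hji'⟩)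
    · simp only [Bool.cond_true] at ht1 ht2
      obtain ⟨i, hi, hev, htD⟩ := (hmemB t).1 ht1
      refine ⟨i, hi, ?_⟩
      by_contra hnmin
      have hlt : sInf (D i) < t := lt_of_le_of_ne (Nat.sInf_le htD) hnmin
      set S : Set ℕ := {x | x ∈ intS e a ∪ intS e b ∧ x < t} with hS
      have hSne : S.Nonempty := ⟨sInf (D i),
        Or.inr ((hmemB _).2 ⟨i, hi, hev, Nat.sInf_mem (hne i hi)⟩), hlt⟩
      have hSbdd : BddAbove S := ⟨t, fun x hx => le_of_lt hx.2⟩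
      have hjmem := Nat.sSup_mem hSne hSbdd
      obtain ⟨i', hi', hji'⟩ : ∃ i', i' < n ∧ sSup S ∈ D i' := by
        rcases hjmem.1 with h | h
        · obtain ⟨i', h1, _, h3⟩ := (hmemA _).1 h; exact ⟨i', h1, h3⟩
        · obtain ⟨i', h1, _, h3⟩ := (hmemB _).1 h; exact ⟨i', h1, h3⟩
      have hii' : i' = i := by
        have h1 : sInf (D i) ≤ sSup S := le_csSup hSbdd
          ⟨Or.inr ((hmemB _).2 ⟨i, hi, hev, Nat.sInf_mem (hne i hi)⟩), hlt⟩
        rcases lt_trichotomy i' i with h | h | h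
        · exact absurd (lt_of_lt_of_le (hsep i' i h hi _ hji' _ (Nat.sInf_mem (hne i hi))) h1)
            (lt_irrefl _)
        · exact h
        · exact absurd (hsep i i' h hi' t htD _ hji') (not_lt.2 (le_of_lt hjmem.2))
      have hconc := hmax (sSup S) hjmem.2 (hsymm _ i' hi' hji')
        (fun j' h1 h2 hj' => absurd (le_csSup hSbdd ⟨(by
          rw [Set.mem_symmDiff] at hj'
          rcases hj' with ⟨h, _⟩ | ⟨h, _⟩
          · exact Or.inl h
          · exact Or.inr h), h2⟩) (not_le.2 h1))
      simp only [Bool.cond_true] at hconc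
      exact hconc.2 ((hmemB _).2 ⟨i, hii' ▸ hi, hii' ▸ hev, hii' ▸ hji'⟩)
  · -- every block minimum oscillates
    rintro ⟨i, hi, rfl⟩
    have htiD : sInf (D i) ∈ D i := Nat.sInf_mem (hne i hi)
    have hprev : ∀ j, j < sInf (D i) → j ∈ symmDiff (intS e a) (intS e b) →
        (∀ j', j < j' → j' < sInf (D i) → j' ∉ symmDiff (intS e a) (intS e b)) →
        (i - 1 < n ∧ j ∈ D (i - 1) ∧ 1 ≤ i) := by
      intro j hj hjs hmax
      obtain ⟨i', hi', hji'⟩ := hcover j hjs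
      have hi'i : i' < i := by
        rcases lt_trichotomy i' i with h | h | h
        · exact h
        · exact absurd hj (not_lt.2 (h ▸ Nat.sInf_le hji'))
        · exact absurd (lt_trans (hsep i i' h hi' _ htiD _ hji') hj) (lt_irrefl _)
      have hcase : i' = i - 1 := by
        by_contra hne'
        have h1 : j < sInf (D (i - 1)) :=
          hsep i' (i - 1) (by omega) (by omega) j hji' _ (Nat.sInf_mem (hne (i - 1) (by omega)))
        have h2 : sInf (D (i - 1)) < sInf (D i) :=
          hsep (i - 1) i (by omega) hi _ (Nat.sInf_mem (hne (i - 1) (by omega))) _ htiD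
        exact hmax _ h1 h2 (hsymm _ (i - 1) (by omega) (Nat.sInf_mem (hne (i - 1) (by omega))))
      exact ⟨by omega, hcase ▸ hji', by omega⟩
    by_cases hev : Even i
    · refine ⟨false, ?_, ?_⟩
      · simp only [Bool.cond_false]
        exact hsideA _ i hi hev htiD
      · intro j hj hjs hmax
        obtain ⟨h1, h2, h3⟩ := hprev j hj hjs hmax
        have hodd : ¬Even (i - 1) := by
          rw [Nat.even_iff] at hev ⊢
          omega
        simp only [Bool.cond_false]
        exact hsideB _ (i - 1) h1 hodd h2
    · refine ⟨true, ?_, ?_⟩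
      · simp only [Bool.cond_true]
        exact hsideB _ i hi hev htiD
      · intro j hj hjs hmax
        obtain ⟨h1, h2, h3⟩ := hprev j hj hjs hmax
        have hodd : Even (i - 1) := by
          rw [Nat.even_iff] at hev ⊢
          omega
        simp only [Bool.cond_true]
        exact hsideA _ (i - 1) h1 hodd h2
lemma main_ind (e : ℚ → ℕ) (he : FinToOne e) {C : Set (Set ℚ)}
    (hC : IsSubalg C) (hCat : IsAtomlessAlg C)
    {s0 : Set ℚ} (hs0C : s0 ∈ C) (hs0ne : s0 ≠ ∅) (hs00 : (0:ℚ) ∉ s0) :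
    ∀ m : ℕ, ∃ a b s : Set ℚ, ∃ D : ℕ → Set ℕ,
      a ∈ C ∧ b ∈ C ∧ s ∈ C ∧ s ≠ ∅ ∧ (0:ℚ) ∉ s ∧
      a ∩ b = ∅ ∧ s ∩ (a ∪ b) = ∅ ∧ (0 : ℚ) ∉ a ∪ b ∧
      (∀ i, i < m → (D i).Nonempty) ∧
      (∀ i j, i < j → j < m → ∀ x ∈ D i, ∀ y ∈ D j, x < y) ∧
      intS e a = ⋃ i ∈ {i : ℕ | i < m ∧ Even i}, D i ∧
      intS e b = ⋃ i ∈ {i : ℕ | i < m ∧ ¬Even i}, D i := by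
  intro m
  induction m with
  | zero =>
    refine ⟨∅, ∅, s0, fun _ => ∅, hC.2.1, hC.2.1, hs0C, hs0ne, hs00, by simp, by simp,
      by simp, by omega, by omega, ?_, ?_⟩
    · simp [intS, endpoints_empty]
    · simp [intS, endpoints_empty]
  | succ m ih =>
    obtain ⟨a, b, s, D, haC, hbC, hsC, hsne, hs0, hab, hsab, h0ab, hDne, hDsep, hIa, hIb⟩ := ih
    have hagood := hC.1 _ haC
    have hbgood := hC.1 _ hbC
    have hfinA : (intS e a).Finite := (endpoints_finite hagood.1 hagood.2).image e
    have hfinB : (intS e b).Finite := (endpoints_finite hbgood.1 hbgood.2).image e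
    obtain ⟨N, hN⟩ : ∃ N, ∀ x ∈ intS e a ∪ intS e b, x ≤ N := by
      rcases (hfinA.union hfinB).bddAbove with ⟨N, hN⟩
      exact ⟨N, fun x hx => hN hx⟩
    have hFfin : ({u : ℚ | u ∈ Eset ∧ e u ≤ N}).Finite := by
      have hsub : {u : ℚ | u ∈ Eset ∧ e u ≤ N} ⊆
          ⋃ j ∈ Finset.range (N + 1), {x : ℚ | x ∈ Eset ∧ e x = j} := by
        rintro u ⟨h1, h2⟩
        exact Set.mem_biUnion (Finset.mem_range.2 (by omega)) ⟨h1, rfl⟩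
      exact (Set.Finite.biUnion (Finset.range (N + 1)).finite_toSet (fun j _ => he j)).subset hsub
    obtain ⟨p, s', hpC, hs'C, hpne, hs'ne, hps, hs's, hps', hpF⟩ :=
      reservoir_split hC hCat hsC hsne hFfin
    have hpgood := hC.1 _ hpC
    have hpbig : ∀ x ∈ intS e p, N < x := by
      rintro x ⟨u, hu, rfl⟩
      by_contra h
      have : u ∈ endpoints p ∩ {u : ℚ | u ∈ Eset ∧ e u ≤ N} :=
        ⟨hu, endpoints_subset_Eset hu, by omega⟩
      rw [hpF] at this; exact this
    have hpint_ne : (intS e p).Nonempty :=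
      (endpoints_nonempty hpgood.2 hpgood.1 hpne).image e
    have hpa : a ∩ p = ∅ := by
      rw [Set.eq_empty_iff_forall_notMem]
      rintro x ⟨hx1, hx2⟩
      have : x ∈ s ∩ (a ∪ b) := ⟨hps hx2, Or.inl hx1⟩
      rw [hsab] at this; exact this
    have hpb : b ∩ p = ∅ := by
      rw [Set.eq_empty_iff_forall_notMem]
      rintro x ⟨hx1, hx2⟩
      have : x ∈ s ∩ (a ∪ b) := ⟨hps hx2, Or.inr hx1⟩
      rw [hsab] at this; exact this
    have h0p : (0:ℚ) ∉ p := fun h => hs0 (hps h)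
    have hs'ab : ∀ x ∈ s', x ∉ a ∪ b ∧ x ∉ p := by
      intro x hx
      constructor
      · intro hx2
        have : x ∈ s ∩ (a ∪ b) := ⟨hs's hx, hx2⟩
        rw [hsab] at this; exact this
      · intro hx2
        have : x ∈ p ∩ s' := ⟨hx2, hx⟩
        rw [hps'] at this; exact this
    have hDsub : ∀ i, i < m → D i ⊆ intS e a ∪ intS e b := by
      intro i him x hx
      by_cases hev : Even i
      · left; rw [hIa]; exact Set.mem_biUnion (⟨him, hev⟩ : i ∈ {i : ℕ | i < m ∧ Even i}) hx
      · right; rw [hIb]; exact Set.mem_biUnion (⟨him, hev⟩ : i ∈ {i : ℕ | i < m ∧ ¬Even i}) hx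
    classical
    set D' : ℕ → Set ℕ := fun i => if i = m then intS e p else D i with hD'
    have hD'ne : ∀ i, i < m + 1 → (D' i).Nonempty := by
      intro i hi
      by_cases him : i = m
      · simpa [hD', him] using hpint_ne
      · simpa [hD', him] using hDne i (by omega)
    have hD'sep : ∀ i j, i < j → j < m + 1 → ∀ x ∈ D' i, ∀ y ∈ D' j, x < y := by
      intro i j hij hj x hx y hy
      by_cases hjm : j = m
      · have him : i ≠ m := by omega
        have hx' : x ∈ D i := by simpa [hD', him] using hx
        have hy' : y ∈ intS e p := by simpa [hD', hjm] using hy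
        have : x ≤ N := hN x (hDsub i (by omega) hx')
        have := hpbig y hy'
        omega
      · have him : i ≠ m := by omega
        have hx' : x ∈ D i := by simpa [hD', him] using hx
        have hy' : y ∈ D j := by simpa [hD', hjm] using hy
        exact hDsep i j hij (by omega) x hx' y hy'
    -- endpoints of the relevant union
    have hepdisj : ∀ c : Set ℚ, c ∈ C → (∀ x ∈ intS e c, x ≤ N) →
        endpoints c ∩ endpoints p = ∅ := by
      intro c hcC hcN
      rw [Set.eq_empty_iff_forall_notMem]
      rintro u ⟨hu1, hu2⟩
      have h1 : e u ≤ N := hcN _ ⟨u, hu1, rfl⟩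
      have h2 : N < e u := hpbig _ ⟨u, hu2, rfl⟩
      omega
    by_cases hm : Even m
    · -- attach the new piece to `a`
      have haux : a ∪ p ∈ C := hC.2.2.2.1 _ haC _ hpC
      have hgap := hC.1 _ haux
      have hIa' : intS e (a ∪ p) = intS e a ∪ intS e p := by
        unfold intS
        rw [endpoints_union hagood.1 hpgood.1 hagood.2 hpgood.2 hgap.2 hpa
          (hepdisj a haC (fun x hx => hN x (Or.inl hx))), Set.image_union]
      refine ⟨a ∪ p, b, s', D', haux, hbC, hs'C, hs'ne, fun h => hs0 (hs's h), ?_, ?_, ?_,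
        hD'ne, hD'sep, ?_, ?_⟩
      · rw [Set.eq_empty_iff_forall_notMem]
        rintro x ⟨hx1 | hx1, hx2⟩
        · have : x ∈ a ∩ b := ⟨hx1, hx2⟩
          rw [hab] at this; exact this
        · have : x ∈ b ∩ p := ⟨hx2, hx1⟩
          rw [hpb] at this; exact this
      · rw [Set.eq_empty_iff_forall_notMem]
        rintro x ⟨hx1, hx2⟩
        rcases hx2 with (h | h) | h
        · exact (hs'ab x hx1).1 (Or.inl h)
        · exact (hs'ab x hx1).2 h
        · exact (hs'ab x hx1).1 (Or.inr h)
      · rintro ((h | h) | h)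
        · exact h0ab (Or.inl h)
        · exact h0p h
        · exact h0ab (Or.inr h)
      · rw [hIa']
        ext x
        simp only [Set.mem_union, hIa, Set.mem_iUnion, Set.mem_setOf_eq, exists_prop]
        constructor
        · rintro (⟨i, ⟨h1, h2⟩, h3⟩ | h)
          · exact ⟨i, ⟨by omega, h2⟩, by simp only [hD', if_neg (show i ≠ m by omega)]; exact h3⟩
          · exact ⟨m, ⟨by omega, hm⟩, by simp only [hD', if_pos rfl]; exact h⟩
        · rintro ⟨i, ⟨h1, h2⟩, h3⟩
          by_cases him : i = m
          · subst him
            right; simpa only [hD', if_pos rfl] using h3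
          · left; exact ⟨i, ⟨by omega, h2⟩, by simpa only [hD', if_neg him] using h3⟩
      · rw [hIb]
        ext x
        simp only [Set.mem_iUnion, Set.mem_setOf_eq, exists_prop]
        constructor
        · rintro ⟨i, ⟨h1, h2⟩, h3⟩
          exact ⟨i, ⟨by omega, h2⟩, by
            simp only [hD', if_neg (show i ≠ m from fun h => h2 (h ▸ hm))]; exact h3⟩
        · rintro ⟨i, ⟨h1, h2⟩, h3⟩
          have him : i ≠ m := fun h => h2 (h ▸ hm)
          exact ⟨i, ⟨by omega, h2⟩, by simpa only [hD', if_neg him] using h3⟩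
    · -- attach the new piece to `b`
      have haux : b ∪ p ∈ C := hC.2.2.2.1 _ hbC _ hpC
      have hgbp := hC.1 _ haux
      have hIb' : intS e (b ∪ p) = intS e b ∪ intS e p := by
        unfold intS
        rw [endpoints_union hbgood.1 hpgood.1 hbgood.2 hpgood.2 hgbp.2 hpb
          (hepdisj b hbC (fun x hx => hN x (Or.inr hx))), Set.image_union]
      refine ⟨a, b ∪ p, s', D', haC, haux, hs'C, hs'ne, fun h => hs0 (hs's h), ?_, ?_, ?_,
        hD'ne, hD'sep, ?_, ?_⟩
      · rw [Set.eq_empty_iff_forall_notMem]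
        rintro x ⟨hx1, hx2 | hx2⟩
        · have : x ∈ a ∩ b := ⟨hx1, hx2⟩
          rw [hab] at this; exact this
        · have : x ∈ a ∩ p := ⟨hx1, hx2⟩
          rw [hpa] at this; exact this
      · rw [Set.eq_empty_iff_forall_notMem]
        rintro x ⟨hx1, hx2⟩
        rcases hx2 with h | (h | h)
        · exact (hs'ab x hx1).1 (Or.inl h)
        · exact (hs'ab x hx1).1 (Or.inr h)
        · exact (hs'ab x hx1).2 h
      · rintro (h | (h | h))
        · exact h0ab (Or.inl h)
        · exact h0ab (Or.inr h)
        · exact h0p h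
      · rw [hIa]
        ext x
        simp only [Set.mem_iUnion, Set.mem_setOf_eq, exists_prop]
        constructor
        · rintro ⟨i, ⟨h1, h2⟩, h3⟩
          exact ⟨i, ⟨by omega, h2⟩, by
            simp only [hD', if_neg (show i ≠ m from fun h => hm (h ▸ h2))]; exact h3⟩
        · rintro ⟨i, ⟨h1, h2⟩, h3⟩
          have him : i ≠ m := fun h => hm (h ▸ h2)
          exact ⟨i, ⟨by omega, h2⟩, by simpa only [hD', if_neg him] using h3⟩
      · rw [hIb']
        ext x
        simp only [Set.mem_union, hIb, Set.mem_iUnion, Set.mem_setOf_eq, exists_prop]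
        constructor
        · rintro (⟨i, ⟨h1, h2⟩, h3⟩ | h)
          · exact ⟨i, ⟨by omega, h2⟩, by simp only [hD', if_neg (show i ≠ m by omega)]; exact h3⟩
          · exact ⟨m, ⟨by omega, hm⟩, by simp only [hD', if_pos rfl]; exact h⟩
        · rintro ⟨i, ⟨h1, h2⟩, h3⟩
          by_cases him : i = m
          · subst him
            right; simpa only [hD', if_pos rfl] using h3
          · left; exact ⟨i, ⟨by omega, h2⟩, by simpa only [hD', if_neg him] using h3⟩
/-- every positive oscillation value is realized by a disjoint
pair avoiding `0` inside any countable atomless subalgebra. -/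
theorem osc_realized (e : ℚ → ℕ) (he : FinToOne e)
    (C : Set (Set ℚ)) (hC : IsSubalg C) (hCat : IsAtomlessAlg C)
    (hCc : C.Countable) (n : ℕ) (hn : 0 < n) :
    ∃ a ∈ C, ∃ b ∈ C, a ∩ b = ∅ ∧ (0 : ℚ) ∉ a ∪ b ∧ osc e a b = n := by
  have hXne : Xset ≠ ∅ := by
    intro h
    have h0 : (0:ℚ) ∈ Xset := ⟨le_refl 0, by norm_num⟩
    rw [h] at h0; exact h0
  obtain ⟨t, htC, htne, htss⟩ := hCat Xset hC.2.2.1 hXne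
  obtain ⟨s0, hs0C, hs0ne, hs00⟩ : ∃ s0, s0 ∈ C ∧ s0 ≠ ∅ ∧ (0:ℚ) ∉ s0 := by
    by_cases h0 : (0:ℚ) ∈ t
    · refine ⟨Xset \ t, hC.2.2.2.2.2 _ htC, ?_, fun h => h.2 h0⟩
      obtain ⟨x, hx1, hx2⟩ := Set.exists_of_ssubset htss
      exact Set.nonempty_iff_ne_empty.1 ⟨x, hx1, hx2⟩
    · exact ⟨t, htC, htne, h0⟩
  obtain ⟨a, b, s, D, haC, hbC, _, _, _, hab, _, h0ab, hDne, hDsep, hIa, hIb⟩ :=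
    main_ind e he hC hCat hs0C hs0ne hs00 n
  refine ⟨a, haC, b, hbC, hab, h0ab, ?_⟩
  unfold osc
  rw [oscAt_char e a b n D hDne hDsep hIa hIb]
  have hinj : Set.InjOn (fun i => sInf (D i)) (Set.Iio n) := by
    intro i hi j hj hij
    simp only [Set.mem_Iio] at hi hj
    by_contra hne
    rcases Nat.lt_or_ge i j with h | h
    · exact absurd hij (ne_of_lt (hDsep i j h hj _ (Nat.sInf_mem (hDne i hi)) _
        (Nat.sInf_mem (hDne j hj))))
    · exact absurd hij.symm (ne_of_lt (hDsep j i (by omega) hi _ (Nat.sInf_mem (hDne j hj)) _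
        (Nat.sInf_mem (hDne i hi))))
  rw [Set.ncard_image_of_injOn hinj, ← Finset.coe_range, Set.ncard_coe_finset,
    Finset.card_range]
end
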